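/- Let M⋆ be a complex Banach space with continuous dual M, and let Λ : M → M be a normal linear map with ‖Λ‖ ≤ 1. Then there exists a linear map E : M → M with ‖E‖ ≤ 1 satisfying E ∘ Λ = Λ ∘ E = E, E ∘ E = E, and range(E) = {x ∈ M : Λ(x) = x}. (E may be obtained as a cluster point, in the topology of pointwise weak*-convergence, of the Cesàro averages A_n = (Λ + Λ² + ⋯ + Λⁿ)/n.) -/

import Mathlib

open Filter Topology

set_option maxHeartbeats 1000000
set_option synthInstance.maxHeartbeats 400000
set_option maxSynthPendingDepth 5

namespace Stmt18

noncomputable def UF : Ultrafilter ℕ := Ultrafilter.of atTop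

lemma UF_le : (UF : Filter ℕ) ≤ atTop := Ultrafilter.of_le _

lemma tendsto_UF {f : ℕ → ℂ} {C : ℝ} (hf : ∀ n, ‖f n‖ ≤ C) :
    Tendsto f UF (𝓝 (limUnder (UF : Filter ℕ) f)) := by
  refine tendsto_nhds_limUnder ?_
  have hmem : (UF.map f : Filter ℂ) ≤ 𝓟 (Metric.closedBall 0 C) := by
    rw [Ultrafilter.coe_map, le_principal_iff, mem_map]
    exact Filter.univ_mem' fun n => by
      simpa [Metric.mem_closedBall, dist_zero_right] using hf n
  obtain ⟨z, -, hz⟩ := (isCompact_closedBall (0:ℂ) C).ultrafilter_le_nhds (UF.map f) hmem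
  exact ⟨z, by rw [Tendsto, ← Ultrafilter.coe_map]; exact hz⟩

variable {Mstar : Type*} [NormedAddCommGroup Mstar] [NormedSpace ℂ Mstar]

noncomputable def A (Λ : (Mstar →L[ℂ] ℂ) →L[ℂ] (Mstar →L[ℂ] ℂ)) (n : ℕ) :
    (Mstar →L[ℂ] ℂ) →L[ℂ] (Mstar →L[ℂ] ℂ) :=
  (n : ℂ)⁻¹ • ∑ k ∈ Finset.range n, Λ ^ (k + 1)

variable {Λ : (Mstar →L[ℂ] ℂ) →L[ℂ] (Mstar →L[ℂ] ℂ)}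

lemma pow_norm_le (hnorm : ‖Λ‖ ≤ 1) : ∀ m, ‖Λ ^ (m+1)‖ ≤ 1 := by
  intro m
  induction m with
  | zero => simpa using hnorm
  | succ m ih =>
      calc ‖Λ ^ (m+2)‖ = ‖Λ ^ (m+1) * Λ‖ := by rw [pow_succ]
      _ ≤ ‖Λ ^ (m+1)‖ * ‖Λ‖ := norm_mul_le _ _
      _ ≤ 1 * 1 := mul_le_mul ih hnorm (norm_nonneg Λ) zero_le_one
      _ = 1 := one_mul 1

lemma normA_le (hnorm : ‖Λ‖ ≤ 1) (n : ℕ) : ‖A Λ n‖ ≤ 1 := by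
  rcases n with _ | n
  · simp [A]
  · rw [A, norm_smul]
    have h1 : ‖(((n:ℕ)+1 : ℂ))⁻¹‖ = (((n:ℕ):ℝ)+1)⁻¹ := by
      rw [norm_inv]
      norm_cast
    have h2 : ‖∑ k ∈ Finset.range (n+1), Λ ^ (k+1)‖ ≤ ((n:ℝ)+1) := by
      calc ‖∑ k ∈ Finset.range (n+1), Λ ^ (k+1)‖
          ≤ ∑ k ∈ Finset.range (n+1), ‖Λ ^ (k+1)‖ := norm_sum_le _ _
      _ ≤ ∑ _k ∈ Finset.range (n+1), (1:ℝ) := Finset.sum_le_sum fun k _ => pow_norm_le hnorm k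
      _ = ((n:ℝ)+1) := by simp
    push_cast
    rw [h1]
    calc (((n:ℕ):ℝ)+1)⁻¹ * ‖∑ k ∈ Finset.range (n+1), Λ ^ (k+1)‖
        ≤ (((n:ℕ):ℝ)+1)⁻¹ * (((n:ℕ):ℝ)+1) :=
          mul_le_mul_of_nonneg_left h2 (by positivity)
    _ = 1 := inv_mul_cancel₀ (by positivity)

lemma bound_apply (hnorm : ‖Λ‖ ≤ 1) (n : ℕ) (x : Mstar →L[ℂ] ℂ) (ρ : Mstar) :
    ‖A Λ n x ρ‖ ≤ ‖x‖ * ‖ρ‖ := by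
  calc ‖A Λ n x ρ‖ ≤ ‖A Λ n x‖ * ‖ρ‖ := (A Λ n x).le_opNorm ρ
  _ ≤ (‖A Λ n‖ * ‖x‖) * ‖ρ‖ := by
      exact mul_le_mul_of_nonneg_right ((A Λ n).le_opNorm x) (norm_nonneg _)
  _ ≤ (1 * ‖x‖) * ‖ρ‖ := by
      have := normA_le hnorm n
      gcongr
  _ = ‖x‖ * ‖ρ‖ := by ring

lemma mulΛ_sub (n : ℕ) : A Λ n * Λ - A Λ n = (n : ℂ)⁻¹ • (Λ^(n+1) - Λ) := by
  have hS : (∑ k ∈ Finset.range n, Λ^(k+1)) * Λ - ∑ k ∈ Finset.range n, Λ^(k+1)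
      = Λ^(n+1) - Λ := by
    rw [Finset.sum_mul]
    have h : ∀ k ∈ Finset.range n, Λ^(k+1) * Λ = Λ^(k+1+1) := fun k _ => (pow_succ Λ (k+1)).symm
    rw [Finset.sum_congr rfl h, ← Finset.sum_sub_distrib]
    have := Finset.sum_range_sub (f := fun k => Λ^(k+1)) n
    simpa using this
  rw [A, smul_mul_assoc, ← smul_sub, hS]

lemma comm_A (n : ℕ) : Λ * A Λ n = A Λ n * Λ := by
  rw [A, smul_mul_assoc, mul_smul_comm]
  congr 1
  exact (Commute.sum_right _ _ _ fun k _ => (Commute.refl Λ).pow_right (k+1)).eq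

lemma norm_diff (hnorm : ‖Λ‖ ≤ 1) (n : ℕ) : ‖A Λ n * Λ - A Λ n‖ ≤ (n:ℝ)⁻¹ * 2 := by
  rw [mulΛ_sub, norm_smul, norm_inv, Complex.norm_natCast]
  have h : ‖Λ^(n+1) - Λ‖ ≤ 2 := by
    calc ‖Λ^(n+1) - Λ‖ ≤ ‖Λ^(n+1)‖ + ‖Λ‖ := norm_sub_le _ _
    _ ≤ 1 + 1 := add_le_add (pow_norm_le hnorm n) hnorm
    _ = 2 := by norm_num
  exact mul_le_mul_of_nonneg_left h (by positivity)

lemma tendsto_diff (hnorm : ‖Λ‖ ≤ 1) (x : Mstar →L[ℂ] ℂ) (ρ : Mstar) :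
    Tendsto (fun n => ((A Λ n * Λ - A Λ n) x) ρ) atTop (𝓝 0) := by
  apply squeeze_zero_norm (a := fun n : ℕ => (n:ℝ)⁻¹ * 2 * ‖x‖ * ‖ρ‖)
  · intro n
    calc ‖((A Λ n * Λ - A Λ n) x) ρ‖ ≤ ‖(A Λ n * Λ - A Λ n) x‖ * ‖ρ‖ :=
        ContinuousLinearMap.le_opNorm _ _
    _ ≤ (‖A Λ n * Λ - A Λ n‖ * ‖x‖) * ‖ρ‖ :=
        mul_le_mul_of_nonneg_right (ContinuousLinearMap.le_opNorm _ _) (norm_nonneg _)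
    _ ≤ ((n:ℝ)⁻¹ * 2 * ‖x‖) * ‖ρ‖ := by
        have := norm_diff hnorm n
        gcongr
    _ = (n:ℝ)⁻¹ * 2 * ‖x‖ * ‖ρ‖ := by ring
  · have h := tendsto_inv_atTop_nhds_zero_nat (𝕜 := ℝ)
    have := ((h.mul_const 2).mul_const ‖x‖).mul_const ‖ρ‖
    simpa using this

lemma A_fixed {x : Mstar →L[ℂ] ℂ} (hx : Λ x = x) {n : ℕ} (hn : n ≠ 0) : A Λ n x = x := by
  have hpow : ∀ k, (Λ^k) x = x := by
    intro k
    induction k with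
    | zero => simp
    | succ k ih => rw [pow_succ, ContinuousLinearMap.mul_apply, hx, ih]
  rw [A, ContinuousLinearMap.smul_apply, ContinuousLinearMap.sum_apply]
  have : ∑ k ∈ Finset.range n, (Λ^(k+1)) x = (n : ℕ) • x := by
    rw [Finset.sum_congr rfl fun k _ => hpow (k+1)]
    simp
  rw [this, ← Nat.cast_smul_eq_nsmul ℂ, smul_smul,
    inv_mul_cancel₀ (Nat.cast_ne_zero.2 hn), one_smul]

variable (Λ) in
lemma tendsto_A (hnorm : ‖Λ‖ ≤ 1) (x : Mstar →L[ℂ] ℂ) (ρ : Mstar) :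
    Tendsto (fun n => A Λ n x ρ) UF
      (𝓝 (limUnder (UF : Filter ℕ) (fun n => A Λ n x ρ))) :=
  tendsto_UF (fun n => bound_apply hnorm n x ρ)

noncomputable def Emap (Λ : (Mstar →L[ℂ] ℂ) →L[ℂ] (Mstar →L[ℂ] ℂ)) (hnorm : ‖Λ‖ ≤ 1) :
    (Mstar →L[ℂ] ℂ) →L[ℂ] (Mstar →L[ℂ] ℂ) :=
  LinearMap.mkContinuous
    { toFun := fun x => LinearMap.mkContinuous
        { toFun := fun ρ => limUnder (UF : Filter ℕ) (fun n => A Λ n x ρ)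
          map_add' := fun ρ σ => tendsto_nhds_unique (tendsto_A Λ hnorm x (ρ + σ))
            (((tendsto_A Λ hnorm x ρ).add (tendsto_A Λ hnorm x σ)).congr
              fun n => (map_add (A Λ n x) ρ σ).symm)
          map_smul' := fun c ρ => tendsto_nhds_unique (tendsto_A Λ hnorm x (c • ρ))
            (((tendsto_A Λ hnorm x ρ).const_smul c).congr
              fun n => (map_smul (A Λ n x) c ρ).symm) }
        ‖x‖ (fun ρ => le_of_tendsto (tendsto_A Λ hnorm x ρ).norm
            (Eventually.of_forall fun n => bound_apply hnorm n x ρ))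
      map_add' := fun x y => ContinuousLinearMap.ext fun ρ => by
        simp only [ContinuousLinearMap.add_apply, LinearMap.mkContinuous_apply,
          LinearMap.coe_mk, AddHom.coe_mk]
        exact tendsto_nhds_unique (tendsto_A Λ hnorm (x + y) ρ)
          (((tendsto_A Λ hnorm x ρ).add (tendsto_A Λ hnorm y ρ)).congr
            fun n => (by simp : A Λ n x ρ + A Λ n y ρ = A Λ n (x + y) ρ))
      map_smul' := fun c x => ContinuousLinearMap.ext fun ρ => by
        simp only [ContinuousLinearMap.smul_apply, LinearMap.mkContinuous_apply,
          LinearMap.coe_mk, AddHom.coe_mk, RingHom.id_apply]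
        exact tendsto_nhds_unique (tendsto_A Λ hnorm (c • x) ρ)
          (((tendsto_A Λ hnorm x ρ).const_smul c).congr
            fun n => (by simp : c • A Λ n x ρ = A Λ n (c • x) ρ)) }
    1 (fun x => by
      simpa using LinearMap.mkContinuous_norm_le _ (norm_nonneg x) _)

lemma Emap_norm_le (hnorm : ‖Λ‖ ≤ 1) : ‖Emap Λ hnorm‖ ≤ 1 :=
  LinearMap.mkContinuous_norm_le _ zero_le_one _

lemma Emap_apply (hnorm : ‖Λ‖ ≤ 1) (x : Mstar →L[ℂ] ℂ) (ρ : Mstar) :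
    Emap Λ hnorm x ρ = limUnder (UF : Filter ℕ) (fun n => A Λ n x ρ) := rfl

lemma tendsto_Emap (hnorm : ‖Λ‖ ≤ 1) (x : Mstar →L[ℂ] ℂ) (ρ : Mstar) :
    Tendsto (fun n => A Λ n x ρ) UF (𝓝 (Emap Λ hnorm x ρ)) := by
  rw [Emap_apply]
  exact tendsto_A Λ hnorm x ρ

lemma tendsto_Emap' (hnorm : ‖Λ‖ ≤ 1) (x : Mstar →L[ℂ] ℂ) (ρ : Mstar) :
    Tendsto (fun n => A Λ n (Λ x) ρ) UF (𝓝 (Emap Λ hnorm x ρ)) := by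
  have hz : Tendsto (fun n => ((A Λ n * Λ - A Λ n) x) ρ) UF (𝓝 0) :=
    (tendsto_diff hnorm x ρ).mono_left UF_le
  have h := (tendsto_Emap hnorm x ρ).add hz
  rw [add_zero] at h
  refine h.congr fun n => ?_
  simp only [ContinuousLinearMap.sub_apply, ContinuousLinearMap.mul_apply]
  ring

lemma Emap_fixed (hnorm : ‖Λ‖ ≤ 1) {x : Mstar →L[ℂ] ℂ} (hx : Λ x = x) :
    Emap Λ hnorm x = x := by
  refine ContinuousLinearMap.ext fun ρ => ?_
  have h' : Tendsto (fun n => A Λ n x ρ) atTop (𝓝 (x ρ)) := by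
    refine Tendsto.congr' ?_ tendsto_const_nhds
    filter_upwards [eventually_ge_atTop 1] with n hn
    rw [A_fixed hx (by omega)]
  exact tendsto_nhds_unique (tendsto_Emap hnorm x ρ) (h'.mono_left UF_le)

end Stmt18

set_option maxSynthPendingDepth 1

open Stmt18 in
/-- Let `M` be the continuous dual of a complex Banach space `M⋆` and
`Λ : M → M` a normal linear map with `‖Λ‖ ≤ 1`.  Then there is a linear map
`E : M → M` with `‖E‖ ≤ 1` satisfying `E ∘ Λ = Λ ∘ E = E`, `E ∘ E = E`, and
`range E = {x ∈ M : Λ(x) = x}`. -/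
theorem stmt18 {Mstar : Type*}
    [NormedAddCommGroup Mstar] [NormedSpace ℂ Mstar] [CompleteSpace Mstar]
    (Λ : (Mstar →L[ℂ] ℂ) →L[ℂ] (Mstar →L[ℂ] ℂ))
    (hnormal : ∃ Λp : Mstar →L[ℂ] Mstar,
      ∀ (x : Mstar →L[ℂ] ℂ) (ρ : Mstar), Λ x ρ = x (Λp ρ))
    (hnorm : ‖Λ‖ ≤ 1) :
    ∃ E : (Mstar →L[ℂ] ℂ) →L[ℂ] (Mstar →L[ℂ] ℂ), ‖E‖ ≤ 1 ∧
      E.comp Λ = E ∧ Λ.comp E = E ∧ E.comp E = E ∧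
      Set.range ⇑E = {x : Mstar →L[ℂ] ℂ | Λ x = x} := by
  obtain ⟨Λp, hΛp⟩ := hnormal
  set E := Emap Λ hnorm with hE
  have hEΛ : E.comp Λ = E := by
    refine ContinuousLinearMap.ext fun x => ContinuousLinearMap.ext fun ρ => ?_
    rw [ContinuousLinearMap.comp_apply]
    exact tendsto_nhds_unique (tendsto_Emap hnorm (Λ x) ρ) (tendsto_Emap' hnorm x ρ)
  have hΛE : Λ.comp E = E := by
    refine ContinuousLinearMap.ext fun x => ContinuousLinearMap.ext fun ρ => ?_
    rw [ContinuousLinearMap.comp_apply]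
    have e1 : Λ (E x) ρ = E x (Λp ρ) := hΛp _ ρ
    have e2 : Tendsto (fun n => A Λ n x (Λp ρ)) UF (𝓝 (E x (Λp ρ))) :=
      tendsto_Emap hnorm x (Λp ρ)
    have e3 : (fun n => A Λ n x (Λp ρ)) = fun n => A Λ n (Λ x) ρ := by
      funext n
      have h0 : Λ (A Λ n x) ρ = A Λ n x (Λp ρ) := hΛp _ ρ
      rw [← h0]
      calc Λ (A Λ n x) ρ = ((Λ * A Λ n) x) ρ := by rw [ContinuousLinearMap.mul_apply]
      _ = ((A Λ n * Λ) x) ρ := by rw [comm_A]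
      _ = A Λ n (Λ x) ρ := by rw [ContinuousLinearMap.mul_apply]
    rw [e1]
    rw [e3] at e2
    exact tendsto_nhds_unique e2 (tendsto_Emap' hnorm x ρ)
  have hfixE : ∀ x, Λ (E x) = E x := fun x => by
    have := ContinuousLinearMap.ext_iff.1 hΛE x
    rwa [ContinuousLinearMap.comp_apply] at this
  have hEE : E.comp E = E := by
    refine ContinuousLinearMap.ext fun x => ?_
    rw [ContinuousLinearMap.comp_apply]
    exact Emap_fixed hnorm (hfixE x)
  refine ⟨E, Emap_norm_le hnorm, hEΛ, hΛE, hEE, ?_⟩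
  ext x
  constructor
  · rintro ⟨y, rfl⟩
    exact hfixE y
  · intro hx
    exact ⟨x, Emap_fixed hnorm hx⟩
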